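/- Let Φ : ℝ → ℝ be the standard normal cumulative distribution function, Φ(x) = (1/√(2π)) ∫_{−∞}^{x} exp(−t²/2) dt. Then both x ↦ log Φ(x) and x ↦ log(1 − Φ(x)) are strictly concave on ℝ. -/

import Mathlib

open Real MeasureTheory Set Filter

private lemma gcont' : Continuous (fun t : ℝ => Real.exp (-t ^ 2 / 2)) := by continuity

private lemma gInt' : Integrable (fun t : ℝ => Real.exp (-t ^ 2 / 2)) := by
  have := integrable_exp_neg_mul_sq (b := (1/2 : ℝ)) (by norm_num)
  convert this using 2 with t
  ring_nf

private lemma gtotal' : (∫ t : ℝ, Real.exp (-t ^ 2 / 2)) = Real.sqrt (2 * Real.pi) := by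
  have := integral_gaussian (1/2 : ℝ)
  rw [show π / (1/2 : ℝ) = 2 * π by ring] at this
  rw [← this]
  congr 1 with t
  ring_nf

noncomputable def Fg (x : ℝ) : ℝ := ∫ t in Set.Iic x, Real.exp (-t ^ 2 / 2)

private lemma Fg_hasDerivAt (x : ℝ) : HasDerivAt Fg (Real.exp (-x ^ 2 / 2)) x := by
  have key : ∀ y : ℝ, Fg y = Fg 0 + ∫ t in (0:ℝ)..y, Real.exp (-t ^ 2 / 2) := by
    intro y
    rw [← intervalIntegral.integral_Iic_sub_Iic (gInt'.integrableOn) (gInt'.integrableOn)]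
    simp [Fg]
  have h1 : HasDerivAt (fun y => Fg 0 + ∫ t in (0:ℝ)..y, Real.exp (-t ^ 2 / 2))
      (Real.exp (-x ^ 2 / 2)) x :=
    (intervalIntegral.integral_hasDerivAt_right
      (gInt'.intervalIntegrable)
      (gcont'.stronglyMeasurableAtFilter _ _) gcont'.continuousAt).const_add _
  exact h1.congr_of_eventuallyEq (Filter.Eventually.of_forall fun y => (key y))

private lemma Fg_pos (x : ℝ) : 0 < Fg x := by
  rw [Fg, MeasureTheory.setIntegral_pos_iff_support_of_nonneg_ae
    (Filter.Eventually.of_forall fun t => (Real.exp_pos _).le) gInt'.integrableOn]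
  have : (Function.support fun t : ℝ => Real.exp (-t ^ 2 / 2)) = Set.univ := by
    ext t; simp [Function.support, Real.exp_ne_zero]
  rw [this]
  simp

private lemma g_hasDerivAt (t : ℝ) :
    HasDerivAt (fun t : ℝ => Real.exp (-t ^ 2 / 2)) (-t * Real.exp (-t ^ 2 / 2)) t := by
  have h1 : HasDerivAt (fun t : ℝ => -t ^ 2 / 2) (-t) t := by
    have := ((hasDerivAt_pow 2 t).neg).div_const 2
    simpa using this.congr_deriv (by push_cast; ring)
  simpa [mul_comm] using h1.exp

private lemma tgInt' : Integrable (fun t : ℝ => -t * Real.exp (-t ^ 2 / 2)) := by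
  have := (integrable_mul_exp_neg_mul_sq (b := (1/2 : ℝ)) (by norm_num)).neg
  convert this using 2 with t
  simp only [Pi.neg_apply]
  ring_nf

private lemma g_tendsto_atBot :
    Tendsto (fun t : ℝ => Real.exp (-t ^ 2 / 2)) atBot (nhds 0) := by
  have h1 : Tendsto (fun t : ℝ => t ^ 2) atBot atTop :=
    ((tendsto_pow_atTop two_ne_zero).comp (tendsto_neg_atBot_atTop (G := ℝ))).congr
      fun t => by simp [neg_pow]
  have h2 : Tendsto (fun t : ℝ => -t ^ 2 / 2) atBot atBot :=
    (((tendsto_neg_atTop_atBot (G := ℝ)).comp h1).atBot_div_const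
      (by norm_num : (0:ℝ) < 2)).congr fun t => by simp [neg_div]
  exact Real.tendsto_exp_atBot.comp h2

private lemma tg_integral (x : ℝ) :
    (∫ t in Set.Iic x, -t * Real.exp (-t ^ 2 / 2)) = Real.exp (-x ^ 2 / 2) := by
  rw [MeasureTheory.integral_Iic_of_hasDerivAt_of_tendsto
    (g_hasDerivAt x).continuousAt.continuousWithinAt
    (fun t _ => g_hasDerivAt t) tgInt'.integrableOn g_tendsto_atBot]
  simp

private lemma mills (x : ℝ) : -x * Fg x < Real.exp (-x ^ 2 / 2) := by
  rcases le_or_gt 0 x with hx | hx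
  · calc -x * Fg x ≤ 0 := mul_nonpos_of_nonpos_of_nonneg (by linarith) (Fg_pos x).le
    _ < _ := Real.exp_pos _
  · have hdiffpos : 0 < ∫ t in Set.Iic x, (x - t) * Real.exp (-t ^ 2 / 2) := by
      have hint : IntegrableOn (fun t : ℝ => (x - t) * Real.exp (-t ^ 2 / 2)) (Set.Iic x) := by
        have : Integrable (fun t : ℝ => (x - t) * Real.exp (-t ^ 2 / 2)) := by
          have := tgInt'.add (gInt'.const_mul x)
          refine this.congr (Filter.Eventually.of_forall fun t => by simp; ring)
        exact this.integrableOn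
      rw [MeasureTheory.setIntegral_pos_iff_support_of_nonneg_ae ?_ hint]
      · refine lt_of_lt_of_le ?_ (measure_mono (?_ : Set.Iio x ⊆ _))
        · simp
        · intro t ht
          constructor
          · simp only [Function.mem_support]
            have : (0:ℝ) < x - t := sub_pos.mpr (Set.mem_Iio.mp ht)
            positivity
          · exact le_of_lt (Set.mem_Iio.mp ht)
      · refine (MeasureTheory.ae_restrict_iff' measurableSet_Iic).2
          (Filter.Eventually.of_forall fun t ht => ?_)
        have : (0:ℝ) ≤ x - t := sub_nonneg.mpr (Set.mem_Iic.mp ht)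
        positivity
    have hsub : (∫ t in Set.Iic x, (x - t) * Real.exp (-t ^ 2 / 2))
        = (∫ t in Set.Iic x, -t * Real.exp (-t ^ 2 / 2))
          - ∫ t in Set.Iic x, -x * Real.exp (-t ^ 2 / 2) := by
      rw [← MeasureTheory.integral_sub tgInt'.integrableOn
        ((gInt'.const_mul (-x)).integrableOn)]
      congr 1 with t
      ring
    rw [hsub, tg_integral, MeasureTheory.integral_const_mul] at hdiffpos
    rw [Fg] at *
    linarith

private lemma Fg_neg (x : ℝ) : Fg (-x) = Real.sqrt (2 * Real.pi) - Fg x := by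
  have h1 : Fg (-x) = ∫ t in Set.Ioi x, Real.exp (-t ^ 2 / 2) := by
    have := integral_comp_neg_Iic (-x) (fun t => Real.exp (-t ^ 2 / 2))
    rw [Fg, ← show (∫ t in Set.Iic (-x), Real.exp (-(-t) ^ 2 / 2))
        = ∫ t in Set.Ioi x, Real.exp (-t ^ 2 / 2) by simpa using this]
    norm_num
  have h3 : Fg x + ∫ t in Set.Ioi x, Real.exp (-t ^ 2 / 2) = Real.sqrt (2 * Real.pi) := by
    rw [← gtotal', Fg]
    exact intervalIntegral.integral_Iic_add_Ioi gInt'.integrableOn gInt'.integrableOn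
  rw [h1]; linarith

private lemma comp_neg_strictConcaveOn {f : ℝ → ℝ} (h : StrictConcaveOn ℝ Set.univ f) :
    StrictConcaveOn ℝ Set.univ (fun x => f (-x)) := by
  refine ⟨convex_univ, fun a _ b _ hab la lb hla hlb hs => ?_⟩
  have hne : (-a : ℝ) ≠ -b := fun h' => hab (neg_injective h')
  calc la • f (-a) + lb • f (-b) < f (la • (-a) + lb • (-b)) :=
        h.2 (Set.mem_univ _) (Set.mem_univ _) hne hla hlb hs
    _ = f (-(la • a + lb • b)) := by congr 1; simp [smul_eq_mul]; ring

private lemma L_strictConcave :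
    StrictConcaveOn ℝ Set.univ (fun x => Real.log ((Real.sqrt (2 * Real.pi))⁻¹ * Fg x)) := by
  set c := (Real.sqrt (2 * Real.pi))⁻¹ with hc
  have hcpos : 0 < c := by
    rw [hc]; positivity
  have hFgcont : Continuous Fg :=
    continuous_iff_continuousAt.2 fun x => (Fg_hasDerivAt x).continuousAt
  have hL : ∀ x, HasDerivAt (fun y => Real.log (c * Fg y))
      (Real.exp (-x ^ 2 / 2) / Fg x) x := by
    intro x
    have h1 : HasDerivAt (fun y => c * Fg y) (c * Real.exp (-x ^ 2 / 2)) x :=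
      (Fg_hasDerivAt x).const_mul c
    have h2 := h1.log (by have := Fg_pos x; positivity)
    rwa [mul_div_mul_left _ _ (ne_of_gt hcpos)] at h2
  have hderivL : deriv (fun y => Real.log (c * Fg y))
      = fun y => Real.exp (-y ^ 2 / 2) / Fg y := funext fun y => (hL y).deriv
  apply strictConcaveOn_of_deriv2_neg convex_univ
  · exact ((continuous_const.mul hFgcont).log
      (fun x => by have := Fg_pos x; exact (mul_pos hcpos this).ne')).continuousOn
  · intro x _
    have hD : HasDerivAt (fun y => Real.exp (-y ^ 2 / 2) / Fg y)
        ((-x * Real.exp (-x ^ 2 / 2) * Fg x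
          - Real.exp (-x ^ 2 / 2) * Real.exp (-x ^ 2 / 2)) / Fg x ^ 2) x :=
      (g_hasDerivAt x).div (Fg_hasDerivAt x) (Fg_pos x).ne'
    have : deriv^[2] (fun y => Real.log (c * Fg y)) x
        = (-x * Real.exp (-x ^ 2 / 2) * Fg x
          - Real.exp (-x ^ 2 / 2) * Real.exp (-x ^ 2 / 2)) / Fg x ^ 2 := by
      simp only [Function.iterate_succ, Function.iterate_zero, Function.comp_apply, id_eq]
      rw [hderivL]
      exact hD.deriv
    rw [this]
    apply div_neg_of_neg_of_pos
    · have h := mills x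
      nlinarith [Real.exp_pos (-x ^ 2 / 2), Fg_pos x]
    · exact pow_pos (Fg_pos x) 2

/-- For the standard normal cdf `Φ(x) = (1/√(2π)) ∫_{−∞}^x exp(−t²/2) dt`, both `log Φ`
and `log (1 − Φ)` are strictly concave on `ℝ`. -/
theorem normal_log_cdf_strictly_concave :
    StrictConcaveOn ℝ Set.univ
      (fun x : ℝ => Real.log
        ((Real.sqrt (2 * Real.pi))⁻¹ * ∫ t in Set.Iic x, Real.exp (-t ^ 2 / 2))) ∧
    StrictConcaveOn ℝ Set.univ
      (fun x : ℝ => Real.log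
        (1 - (Real.sqrt (2 * Real.pi))⁻¹ * ∫ t in Set.Iic x, Real.exp (-t ^ 2 / 2))) := by
  constructor
  · exact L_strictConcave
  · have hkey : (fun x : ℝ => Real.log
        (1 - (Real.sqrt (2 * Real.pi))⁻¹ * ∫ t in Set.Iic x, Real.exp (-t ^ 2 / 2)))
        = fun x : ℝ => Real.log ((Real.sqrt (2 * Real.pi))⁻¹ * Fg (-x)) := by
      funext x
      congr 1
      rw [Fg_neg]
      have hs : Real.sqrt (2 * Real.pi) ≠ 0 := by positivity
      field_simp [Fg]
      simp only [Fg, neg_div]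
    rw [hkey]
    exact comp_neg_strictConcaveOn L_strictConcave
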